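/- arXiv:2304.01595 — 5 statements merged into one kernel-verified Lean document; each statement's English description precedes it below -/
import Mathlib

section
/- There exists a constant C_k > 0, depending only on k > 0, such that for all t, r > 0, ( (cosh(t-r))^{-k} − (cosh(t+r))^{-k} ) / (2k · sinh t · sinh r) ≤ C_k / ( cosh t · cosh r · (cosh(t-r))^{k} ). -/
theorem spherical_mean_theta_bound (k : ℝ) (hk : 0 < k) :
    ∃ C : ℝ, 0 < C ∧ ∀ t r : ℝ, 0 < t → 0 < r →
      ((Real.cosh (t - r)) ^ (-k) - (Real.cosh (t + r)) ^ (-k))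
          / (2 * k * Real.sinh t * Real.sinh r)
        ≤ C / (Real.cosh t * Real.cosh r * (Real.cosh (t - r)) ^ k) := by
  have hM : (0:ℝ) < max k 1 := lt_max_of_lt_right one_pos
  refine ⟨max k 1 / k, div_pos hM hk, fun t r ht hr => ?_⟩
  have hS : 0 < Real.sinh t * Real.sinh r :=
    mul_pos (Real.sinh_pos_iff.2 ht) (Real.sinh_pos_iff.2 hr)
  have hP1 : 1 ≤ Real.cosh t * Real.cosh r := by
    nlinarith [Real.one_le_cosh t, Real.one_le_cosh r]
  set S := Real.sinh t * Real.sinh r with hS_def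
  set P := Real.cosh t * Real.cosh r with hP_def
  have ha : Real.cosh (t - r) = P - S := Real.cosh_sub t r
  have hb : Real.cosh (t + r) = P + S := Real.cosh_add t r
  have h1a : 1 ≤ P - S := ha ▸ Real.one_le_cosh (t - r)
  have h0a : (0:ℝ) < P - S := by linarith
  have h0b : (0:ℝ) < P + S := by linarith
  set a := P - S with ha_def
  set b := P + S with hb_def
  rw [ha, hb]
  -- key: 1 - (a/b)^k ≤ max k 1 * (1 - a/b)
  have hu0 : 0 < a / b := div_pos h0a h0b
  have hu1 : a / b ≤ 1 := by
    rw [div_le_one h0b]; linarith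
  have uKey : 1 - (a / b) ^ k ≤ max k 1 * (1 - a / b) := by
    rcases le_or_gt 1 k with hk1 | hk1
    · have hber := one_add_mul_self_le_rpow_one_add (s := a / b - 1) (by linarith) hk1
      have : (1 + (a / b - 1)) = a / b := by ring
      rw [this] at hber
      have hmax : k ≤ max k 1 := le_max_left k 1
      nlinarith
    · have h2 : a / b ≤ (a / b) ^ k := by
        have := Real.rpow_le_rpow_of_exponent_ge hu0 hu1 hk1.le
        rwa [Real.rpow_one] at this
      have hmax : (1:ℝ) ≤ max k 1 := le_max_right k 1
      nlinarith
  rw [div_le_div_iff₀ (by positivity) (by positivity)]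
  have e1 : a ^ (-k) * a ^ k = 1 := by
    rw [← Real.rpow_add h0a]; simp
  have e2 : b ^ (-k) * a ^ k = (a / b) ^ k := by
    rw [Real.rpow_neg h0b.le, Real.div_rpow h0a.le h0b.le]
    field_simp
  have expand : (a ^ (-k) - b ^ (-k)) * (P * a ^ k) = (1 - (a / b) ^ k) * P := by
    linear_combination P * e1 - P * e2
  rw [expand]
  have hPb : P / b ≤ 1 := by
    rw [div_le_one h0b]; linarith
  have hP0 : (0:ℝ) < P := by linarith
  calc (1 - (a / b) ^ k) * P ≤ (max k 1 * (1 - a / b)) * P :=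
        mul_le_mul_of_nonneg_right uKey hP0.le
    _ = max k 1 * (2 * S) * (P / b) := by
        have h2S : 1 - a / b = 2 * S / b := by
          rw [ha_def, hb_def]
          field_simp
          ring
        rw [h2S]
        ring
    _ ≤ max k 1 * (2 * S) * 1 := by
        apply mul_le_mul_of_nonneg_left hPb
        positivity
    _ = max k 1 / k * (2 * k * Real.sinh t * Real.sinh r) := by
        rw [mul_one, hS_def]
        field_simp
end

section
/- Let p > 3 and h ∈ (1, p−2). For every δ > 0 there exists ε₀ > 0 such that for all ε ∈ (0, ε₀] and all t ≥ r with 0 < r ≤ min(1,t): ∫_{t-r}^{t+r} ∫_{-β}^{(t-r)/2} ( ln(1/ε) + β − α )^{1-p} ⟨α⟩^{-h} dα dβ ≤ δ · r · ⟨t−r⟩^{-h}, where ⟨α⟩ = √(1+α²). -/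
open intervalIntegral

/-- ⟨α⟩ = √(1+α²), Case 1: r ≤ min(1,t). -/
theorem claim_case1 (p h : ℝ) (hp : 3 < p) (hh1 : 1 < h) (hh2 : h < p - 2) :
    ∀ δ : ℝ, 0 < δ → ∃ ε₀ : ℝ, 0 < ε₀ ∧ ∀ ε : ℝ, 0 < ε → ε ≤ ε₀ →
      ∀ t r : ℝ, 0 < r → r ≤ 1 → r ≤ t →
        (∫ β in (t - r)..(t + r), ∫ α in (-β)..((t - r)/2),
            (Real.log (1/ε) + β - α) ^ (1 - p) * (Real.sqrt (1 + α^2)) ^ (-h))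
          ≤ δ * r * (Real.sqrt (1 + (t - r)^2)) ^ (-h) := by
  intro δ hδ
  have hq0 : 0 < p - 2 - h := by linarith
  set M : ℝ := max 2 ((2 ^ (h + 3) / δ) ^ (p - 2 - h)⁻¹) with hMdef
  have hM2 : (2:ℝ) ≤ M := le_max_left _ _
  refine ⟨Real.exp (-M), Real.exp_pos _, ?_⟩
  intro ε hε hεM t r hr hr1 hrt
  set s := t - r with hs
  have hs0 : 0 ≤ s := by rw [hs]; linarith
  set L := Real.log (1/ε) with hLdef
  have hLM : M ≤ L := by
    have h1 : Real.log ε ≤ -M := by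
      calc Real.log ε ≤ Real.log (Real.exp (-M)) := Real.log_le_log hε hεM
        _ = -M := Real.log_exp _
    rw [hLdef, one_div, Real.log_inv]; linarith
  have hL2 : (2:ℝ) ≤ L := le_trans hM2 hLM
  have hLs : 0 < L + s/2 := by linarith
  set A : ℝ := (L + s/2) ^ (1 - p) with hA
  have hA0 : 0 ≤ A := Real.rpow_nonneg hLs.le _
  -- inner bound
  have inner_bound : ∀ β ∈ Set.uIoc (t - r) (t + r),
      ‖∫ α in (-β)..(s/2), (L + β - α) ^ (1 - p) * (Real.sqrt (1 + α^2)) ^ (-h)‖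
        ≤ A * (3*s/2 + 2) := by
    intro β hβ
    rw [Set.uIoc_of_le (by linarith : t - r ≤ t + r)] at hβ
    obtain ⟨hβ1, hβ2⟩ := hβ
    have hβs : s ≤ β := by rw [hs]; exact hβ1.le
    have key : ‖∫ α in (-β)..(s/2), (L + β - α) ^ (1 - p) * (Real.sqrt (1 + α^2)) ^ (-h)‖
        ≤ A * |s/2 - (-β)| := by
      apply intervalIntegral.norm_integral_le_of_norm_le_const
      intro α hα
      rw [Set.uIoc_of_le (by linarith : -β ≤ s/2)] at hα
      obtain ⟨hα1, hα2⟩ := hα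
      have hbase : L + s/2 ≤ L + β - α := by linarith
      have h1 : (L + β - α) ^ (1 - p) ≤ A := by
        rw [hA]
        exact Real.rpow_le_rpow_of_nonpos hLs hbase (by linarith)
      have hsq1 : (1:ℝ) ≤ Real.sqrt (1 + α^2) := by
        have h' : Real.sqrt 1 ≤ Real.sqrt (1 + α^2) :=
          Real.sqrt_le_sqrt (by nlinarith [sq_nonneg α])
        simpa using h' 
      have h2 : (Real.sqrt (1 + α^2)) ^ (-h) ≤ 1 :=
        Real.rpow_le_one_of_one_le_of_nonpos hsq1 (by linarith)
      have hnn : 0 ≤ (L + β - α) ^ (1 - p) * (Real.sqrt (1 + α^2)) ^ (-h) :=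
        mul_nonneg (Real.rpow_nonneg (by linarith) _)
          (Real.rpow_nonneg (Real.sqrt_nonneg _) _)
      rw [Real.norm_eq_abs, abs_of_nonneg hnn]
      calc (L + β - α) ^ (1 - p) * (Real.sqrt (1 + α^2)) ^ (-h)
          ≤ A * 1 := mul_le_mul h1 h2 (Real.rpow_nonneg (Real.sqrt_nonneg _) _) hA0
        _ = A := mul_one A
    refine key.trans ?_
    refine mul_le_mul_of_nonneg_left ?_ hA0
    rw [abs_of_nonneg (by linarith)]
    have hβub : β ≤ s + 2*r := by rw [hs]; linarith
    linarith
  have outer : ‖∫ β in (t - r)..(t + r), ∫ α in (-β)..(s/2),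
      (L + β - α) ^ (1 - p) * (Real.sqrt (1 + α^2)) ^ (-h)‖
      ≤ (A * (3*s/2 + 2)) * |t + r - (t - r)| :=
    intervalIntegral.norm_integral_le_of_norm_le_const inner_bound
  have habs : |t + r - (t - r)| = 2*r := by rw [abs_of_nonneg (by linarith)]; ring
  rw [habs] at outer
  have step1 : (∫ β in (t - r)..(t + r), ∫ α in (-β)..(s/2),
      (L + β - α) ^ (1 - p) * (Real.sqrt (1 + α^2)) ^ (-h))
      ≤ A * (3*s/2 + 2) * (2*r) := le_trans (le_abs_self _) outer
  refine le_trans step1 ?_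
  -- now the purely numeric part
  have hsq_le : Real.sqrt (1 + s^2) ≤ 1 + s := by
    rw [show (1:ℝ) + s = Real.sqrt ((1+s)^2) from (Real.sqrt_sq (by linarith)).symm]
    exact Real.sqrt_le_sqrt (by nlinarith)
  have hsq_pos : 0 < Real.sqrt (1 + s^2) := Real.sqrt_pos.mpr (by positivity)
  have h1s : (0:ℝ) < 1 + s := by linarith
  have hstep : ((1:ℝ) + s) ^ (-h) ≤ (Real.sqrt (1 + s^2)) ^ (-h) :=
    Real.rpow_le_rpow_of_nonpos hsq_pos hsq_le (by linarith)
  have main : A * (3*s/2 + 2) * (2*r) ≤ δ * r * ((1:ℝ) + s) ^ (-h) := by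
    have hX : (0:ℝ) < (L + s/2) ^ (p - 1) := Real.rpow_pos_of_pos hLs _
    have hY : (0:ℝ) < (1 + s) ^ h := Real.rpow_pos_of_pos h1s _
    have hAeq : A = ((L + s/2) ^ (p - 1))⁻¹ := by
      rw [hA, show (1 - p) = -(p-1) by ring, Real.rpow_neg hLs.le]
    have hYeq : ((1:ℝ) + s) ^ (-h) = ((1 + s) ^ h)⁻¹ := Real.rpow_neg h1s.le _
    -- key inequality: (3s+4) * (1+s)^h ≤ δ * (L+s/2)^(p-1)
    have key : (3*s + 4) * (1 + s) ^ h ≤ δ * (L + s/2) ^ (p - 1) := by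
      have e1 : (L + s/2) ^ (p - 1) = (L + s/2) ^ (h + 1) * (L + s/2) ^ (p - 2 - h) := by
        rw [← Real.rpow_add hLs]; ring_nf
      have e2 : ((1 + s)/2) ^ (h + 1) ≤ (L + s/2) ^ (h + 1) :=
        Real.rpow_le_rpow (by linarith) (by linarith) (by linarith)
      have e2' : ((1 + s)/2 : ℝ) ^ (h + 1) = (1 + s) ^ (h + 1) / 2 ^ (h + 1) :=
        Real.div_rpow h1s.le (by norm_num : (0:ℝ) ≤ 2) (h + 1)
      have e3 : (2:ℝ) ^ (h + 3) / δ ≤ (L + s/2) ^ (p - 2 - h) := by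
        have hMle : ((2:ℝ) ^ (h + 3) / δ) ^ (p - 2 - h)⁻¹ ≤ M := le_max_right _ _
        have hMb : (0:ℝ) ≤ ((2:ℝ) ^ (h + 3) / δ) ^ (p - 2 - h)⁻¹ :=
          Real.rpow_nonneg (by positivity) _
        calc (2:ℝ) ^ (h + 3) / δ
            = (((2:ℝ) ^ (h + 3) / δ) ^ (p - 2 - h)⁻¹) ^ (p - 2 - h) :=
              (Real.rpow_inv_rpow (by positivity) hq0.ne').symm
          _ ≤ M ^ (p - 2 - h) := Real.rpow_le_rpow hMb hMle hq0.le
          _ ≤ (L + s/2) ^ (p - 2 - h) :=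
              Real.rpow_le_rpow (by linarith) (by linarith) hq0.le
      have h23 : (2:ℝ) ^ (h + 3) = 4 * 2 ^ (h + 1) := by
        rw [show h + 3 = 2 + (h + 1) by ring, Real.rpow_add (by norm_num : (0:ℝ) < 2)]
        norm_num
      have h2h1 : (0:ℝ) < 2 ^ (h + 1) := Real.rpow_pos_of_pos (by norm_num) _
      have e4 : (1 + s) ^ (h + 1) = (1 + s) * (1 + s) ^ h := by
        rw [Real.rpow_add h1s, Real.rpow_one]; ring
      have lb : 4 * (1 + s) ^ (h + 1) ≤ δ * (L + s/2) ^ (p - 1) := by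
        rw [e1]
        have hu : (0:ℝ) ≤ (1 + s) ^ (h + 1) / 2 ^ (h + 1) := by positivity
        have hv : (0:ℝ) ≤ (2:ℝ) ^ (h + 3) / δ := by positivity
        have := mul_le_mul (e2'.symm.le.trans e2) e3 hv
          (Real.rpow_nonneg hLs.le _)
        calc 4 * (1 + s) ^ (h + 1)
            = ((1 + s) ^ (h + 1) / 2 ^ (h + 1)) * ((2:ℝ) ^ (h + 3) / δ) * δ := by
              rw [h23]; field_simp
          _ ≤ (L + s/2) ^ (h + 1) * (L + s/2) ^ (p - 2 - h) * δ := by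
              exact mul_le_mul_of_nonneg_right this hδ.le
          _ = δ * ((L + s/2) ^ (h + 1) * (L + s/2) ^ (p - 2 - h)) := by ring
      calc (3*s + 4) * (1 + s) ^ h ≤ 4 * (1 + s) * (1 + s) ^ h :=
            mul_le_mul_of_nonneg_right (by linarith) hY.le
        _ = 4 * (1 + s) ^ (h + 1) := by rw [e4]; ring
        _ ≤ δ * (L + s/2) ^ (p - 1) := lb
    have goal' : (3*s + 4) * A ≤ δ * (1 + s) ^ (-h) := by
      rw [hAeq, hYeq, ← div_eq_mul_inv, ← div_eq_mul_inv, div_le_div_iff₀ hX hY]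
      linarith [key]
    calc A * (3*s/2 + 2) * (2*r) = r * ((3*s + 4) * A) := by ring
      _ ≤ r * (δ * (1 + s) ^ (-h)) := mul_le_mul_of_nonneg_left goal' hr.le
      _ = δ * r * (1 + s) ^ (-h) := by ring
  calc A * (3*s/2 + 2) * (2*r) ≤ δ * r * ((1:ℝ) + s) ^ (-h) := main
    _ ≤ δ * r * (Real.sqrt (1 + s^2)) ^ (-h) :=
        mul_le_mul_of_nonneg_left hstep (by positivity)
end

section
/- Let p > 3 and h ∈ (1, p−2). For every δ > 0 there exists ε₀ > 0 such that for all ε ∈ (0, ε₀] and all t ≥ r ≥ 1: ∫_{t-r}^{t+r} ∫_{(t-r)/2}^{t-r} ( ln(1/ε) + β − α )^{1-p} ⟨α⟩^{-h} dα dβ ≤ δ · ⟨t−r⟩^{-h}. -/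
open intervalIntegral

private lemma inner_eval (p c a b : ℝ) (hp : 2 < p) (hab : a ≤ b) (hc : 0 < c - b) :
    ∫ α in a..b, (c - α) ^ (1 - p) = ((c - b) ^ (2 - p) - (c - a) ^ (2 - p)) / (p - 2) := by
  rw [intervalIntegral.integral_comp_sub_left (fun x => x ^ (1 - p)) c]
  rw [integral_rpow (Or.inr ⟨by intro hcon; linarith [hcon], ?_⟩)]
  · have h1 : 1 - p + 1 = 2 - p := by ring
    rw [h1]
    have h2 : (2 : ℝ) - p ≠ 0 := by intro hcon; linarith
    have h3 : (p : ℝ) - 2 ≠ 0 := by intro hcon; linarith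
    field_simp
    ring
  · rw [Set.uIcc_of_le (by linarith : c - b ≤ c - a)]
    intro hcon
    have := hcon.1
    linarith

private lemma outer_eval (p L b B : ℝ) (hp : 3 < p) (hbB : b ≤ B) (hL : 0 < L) :
    ∫ β in b..B, (L + β - b) ^ (2 - p)
      = (L ^ (3 - p) - (L + (B - b)) ^ (3 - p)) / (p - 3) := by
  have h1 : ∀ β : ℝ, L + β - b = β + (L - b) := fun β => by ring
  simp_rw [h1]
  rw [intervalIntegral.integral_comp_add_right (fun x => x ^ (2 - p)) (L - b)]
  have hb : b + (L - b) = L := by ring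
  have hB : B + (L - b) = L + (B - b) := by ring
  rw [hb, hB]
  rw [integral_rpow (Or.inr ⟨by intro hcon; linarith [hcon], ?_⟩)]
  · have h1 : 2 - p + 1 = 3 - p := by ring
    rw [h1]
    have h2 : (3 : ℝ) - p ≠ 0 := by intro hcon; linarith
    have h3 : (p : ℝ) - 3 ≠ 0 := by intro hcon; linarith
    field_simp
    ring
  · rw [Set.uIcc_of_le (by linarith : L ≤ L + (B - b))]
    intro hcon
    have := hcon.1
    linarith

/-- ⟨α⟩ = √(1+α²), Case 2: 1 ≤ r ≤ t, near-cone part. -/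
theorem claim_case2 (p h : ℝ) (hp : 3 < p) (hh1 : 1 < h) (hh2 : h < p - 2) :
    ∀ δ : ℝ, 0 < δ → ∃ ε₀ : ℝ, 0 < ε₀ ∧ ∀ ε : ℝ, 0 < ε → ε ≤ ε₀ →
      ∀ t r : ℝ, 1 ≤ r → r ≤ t →
        (∫ β in (t - r)..(t + r), ∫ α in ((t - r)/2)..(t - r),
            (Real.log (1/ε) + β - α) ^ (1 - p) * (Real.sqrt (1 + α^2)) ^ (-h))
          ≤ δ * (Real.sqrt (1 + (t - r)^2)) ^ (-h) := by
  intro δ hδ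
  have h2h : (0:ℝ) < (2:ℝ) ^ h := Real.rpow_pos_of_pos (by norm_num) h
  have hp2 : (0:ℝ) < p - 2 := by linarith
  have hp3 : (0:ℝ) < p - 3 := by linarith
  set A : ℝ := δ * (p - 2) * (p - 3) / 2 ^ h with hAdef
  have hA0 : 0 < A := by
    apply div_pos _ h2h
    positivity
  set C : ℝ := max 1 (A ^ (-(1 / (p - 3)))) with hCdef
  refine ⟨Real.exp (-C), Real.exp_pos _, ?_⟩
  intro ε hε hεle t r hr hrt
  set L : ℝ := Real.log (1/ε) with hLdef
  have hLC : C ≤ L := by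
    rw [hLdef, one_div, Real.log_inv]
    have h1 : Real.log ε ≤ Real.log (Real.exp (-C)) := Real.log_le_log hε hεle
    rw [Real.log_exp] at h1
    linarith
  have hL1 : 1 ≤ L := le_trans (le_max_left _ _) hLC
  have hL0 : 0 < L := by linarith
  set b : ℝ := t - r with hbdef
  have hb0 : 0 ≤ b := by rw [hbdef]; linarith
  have hab : b / 2 ≤ b := by linarith
  have hbB : b ≤ t + r := by rw [hbdef]; linarith
  set J : ℝ := Real.sqrt (1 + b ^ 2) with hJdef
  have hJ1 : 1 ≤ J := by
    have h6 := Real.sqrt_le_sqrt (show (1:ℝ) ≤ 1 + b ^ 2 by nlinarith)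
    rw [Real.sqrt_one] at h6
    rw [hJdef]
    exact h6
  have hJ0 : 0 < J := lt_of_lt_of_le one_pos hJ1
  set K : ℝ := 2 ^ h * J ^ (-h) with hKdef
  have hK0 : 0 < K := mul_pos h2h (Real.rpow_pos_of_pos hJ0 _)
  -- bound on ⟨α⟩^{-h} on [b/2, b]
  have hαK : ∀ α ∈ Set.Icc (b/2) b, Real.sqrt (1 + α ^ 2) ^ (-h) ≤ K := by
    intro α hα
    have hsq : J / 2 ≤ Real.sqrt (1 + α ^ 2) := by
      have h5 : Real.sqrt ((1 + b ^ 2) / 4) = J / 2 := by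
        have he : (1 + b ^ 2) / 4 = (J / 2) ^ 2 := by
          rw [hJdef, div_pow, Real.sq_sqrt (by positivity : (0:ℝ) ≤ 1 + b ^ 2)]
          norm_num
        rw [he, Real.sqrt_sq (by linarith : (0:ℝ) ≤ J / 2)]
      have h4 : Real.sqrt ((1 + b ^ 2) / 4) ≤ Real.sqrt (1 + α ^ 2) :=
        Real.sqrt_le_sqrt (by nlinarith [hα.1, hα.2])
      rw [h5] at h4; exact h4
    have hJ2 : (0:ℝ) < J / 2 := by linarith
    calc Real.sqrt (1 + α ^ 2) ^ (-h) ≤ (J / 2) ^ (-h) :=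
          Real.rpow_le_rpow_of_nonpos hJ2 hsq (by linarith)
      _ = K := by
          rw [hKdef, Real.div_rpow hJ0.le (by norm_num : (0:ℝ) ≤ 2),
            Real.rpow_neg (by norm_num : (0:ℝ) ≤ 2), div_eq_mul_inv, inv_inv, mul_comm]
  -- the regularized integrand
  set g : ℝ → ℝ → ℝ :=
    fun β α => (max (L + β - α) L) ^ (1 - p) * Real.sqrt (1 + α ^ 2) ^ (-h) with hgdef
  have hgc0 : Continuous
      (fun q : ℝ × ℝ => (max (L + q.1 - q.2) L) ^ (1 - p) * Real.sqrt (1 + q.2 ^ 2) ^ (-h)) := by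
    apply Continuous.mul
    · apply Continuous.rpow_const (by fun_prop)
      intro q
      exact Or.inl (lt_of_lt_of_le hL0 (le_max_right _ _)).ne'
    · apply Continuous.rpow_const (by fun_prop)
      intro q
      exact Or.inl (Real.sqrt_pos.2 (by positivity)).ne'
  have hgc : Continuous (Function.uncurry g) := by
    rw [hgdef]; exact hgc0
  have hgInner : ∀ β : ℝ, IntervalIntegrable (g β) MeasureTheory.volume (b/2) b :=
    fun β => (hgc.comp (Continuous.prodMk_right β)).intervalIntegrable _ _
  set F : ℝ → ℝ := fun β => ∫ α in (b/2)..b, g β α with hFdef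
  have hFc : Continuous F :=
    intervalIntegral.continuous_parametric_intervalIntegral_of_continuous' hgc _ _
  have hEq : (∫ β in b..(t + r), ∫ α in (b/2)..b,
      (L + β - α) ^ (1 - p) * Real.sqrt (1 + α ^ 2) ^ (-h)) = ∫ β in b..(t + r), F β := by
    apply intervalIntegral.integral_congr
    intro β hβ
    rw [Set.uIcc_of_le hbB] at hβ
    apply intervalIntegral.integral_congr
    intro α hα
    rw [Set.uIcc_of_le hab] at hα
    have hle : L ≤ L + β - α := by
      have := hβ.1; have := hα.2; linarith
    simp only [hgdef, max_eq_left hle]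
  set B : ℝ → ℝ := fun β => K * ((L + β - b) ^ (2 - p) / (p - 2)) with hBdef
  have hFB : ∀ β ∈ Set.Icc b (t + r), F β ≤ B β := by
    intro β hβ
    have hcb : 0 < L + β - b := by have := hβ.1; linarith
    have step1 : F β ≤ ∫ α in (b/2)..b, K * (L + β - α) ^ (1 - p) := by
      apply intervalIntegral.integral_mono_on hab (hgInner β) ?_ ?_
      · apply ContinuousOn.intervalIntegrable
        apply ContinuousOn.mul continuousOn_const
        apply ContinuousOn.rpow_const (by fun_prop)
        intro α hα
        rw [Set.uIcc_of_le hab] at hα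
        have h6 := hα.2
        have h7 := hβ.1
        exact Or.inl (by linarith : (0:ℝ) < L + β - α).ne'
      · intro α hα
        have hd1 := hα.2
        have hd2 := hβ.1
        have hbase : 0 < L + β - α := by linarith
        simp only [hgdef, max_eq_left (by linarith : L ≤ L + β - α)]
        calc (L + β - α) ^ (1 - p) * Real.sqrt (1 + α ^ 2) ^ (-h)
            ≤ (L + β - α) ^ (1 - p) * K :=
              mul_le_mul_of_nonneg_left (hαK α hα) (Real.rpow_nonneg hbase.le _)
          _ = K * (L + β - α) ^ (1 - p) := mul_comm _ _
    have step2 : (∫ α in (b/2)..b, K * (L + β - α) ^ (1 - p))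
        = K * (((L + β - b) ^ (2 - p) - (L + β - b/2) ^ (2 - p)) / (p - 2)) := by
      rw [intervalIntegral.integral_const_mul]
      rw [inner_eval p (L + β) (b/2) b (by linarith) hab (by linarith)]
    have step3 : K * (((L + β - b) ^ (2 - p) - (L + β - b/2) ^ (2 - p)) / (p - 2)) ≤ B β := by
      rw [hBdef]
      apply mul_le_mul_of_nonneg_left _ hK0.le
      have hnn : 0 ≤ (L + β - b/2) ^ (2 - p) := Real.rpow_nonneg (by linarith) _
      apply div_le_div_of_nonneg_right _ hp2.le
      linarith
    calc F β ≤ _ := step1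
      _ = _ := step2
      _ ≤ B β := step3
  have hBint : IntervalIntegrable B MeasureTheory.volume b (t + r) := by
    apply ContinuousOn.intervalIntegrable
    apply ContinuousOn.mul continuousOn_const
    apply ContinuousOn.div_const
    apply ContinuousOn.rpow_const (by fun_prop)
    intro β hβ
    rw [Set.uIcc_of_le hbB] at hβ
    have := hβ.1
    exact Or.inl (by linarith : (0:ℝ) < L + β - b).ne'
  have hout : (∫ β in b..(t + r), B β)
      = K * ((L ^ (3 - p) - (L + (t + r - b)) ^ (3 - p)) / (p - 3) / (p - 2)) := by
    calc (∫ β in b..(t + r), B β)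
        = ∫ β in b..(t + r), K / (p - 2) * (L + β - b) ^ (2 - p) := by
          apply intervalIntegral.integral_congr
          intro β _
          simp only [hBdef]
          ring
      _ = K / (p - 2) * ((L ^ (3 - p) - (L + (t + r - b)) ^ (3 - p)) / (p - 3)) := by
          rw [intervalIntegral.integral_const_mul, outer_eval p L b (t + r) hp hbB hL0]
      _ = K * ((L ^ (3 - p) - (L + (t + r - b)) ^ (3 - p)) / (p - 3) / (p - 2)) := by ring
  -- key numeric bound
  have hL3p : L ^ (3 - p) ≤ A := by
    have h1 : A ^ (-(1 / (p - 3))) ≤ L := le_trans (le_max_right _ _) hLC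
    have h2 : (0:ℝ) < A ^ (-(1 / (p - 3))) := Real.rpow_pos_of_pos hA0 _
    have h3 : L ^ (3 - p) ≤ (A ^ (-(1 / (p - 3)))) ^ (3 - p) :=
      Real.rpow_le_rpow_of_nonpos h2 h1 (by linarith)
    have h4 : (A ^ (-(1 / (p - 3)))) ^ (3 - p) = A := by
      rw [← Real.rpow_mul hA0.le]
      rw [show -(1 / (p - 3)) * (3 - p) = 1 from by field_simp; ring]
      exact Real.rpow_one A
    rw [h4] at h3
    exact h3
  rw [hEq]
  calc (∫ β in b..(t + r), F β) ≤ ∫ β in b..(t + r), B β :=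
        intervalIntegral.integral_mono_on hbB (hFc.intervalIntegrable _ _) hBint hFB
    _ = K * ((L ^ (3 - p) - (L + (t + r - b)) ^ (3 - p)) / (p - 3) / (p - 2)) := hout
    _ ≤ K * (L ^ (3 - p) / (p - 3) / (p - 2)) := by
        apply mul_le_mul_of_nonneg_left _ hK0.le
        have hnn : 0 ≤ (L + (t + r - b)) ^ (3 - p) := by
          apply Real.rpow_nonneg
          have : b ≤ t + r := hbB
          linarith
        apply div_le_div_of_nonneg_right _ hp2.le
        apply div_le_div_of_nonneg_right _ hp3.le
        linarith
    _ = J ^ (-h) * (2 ^ h * L ^ (3 - p) / ((p - 2) * (p - 3))) := by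
        rw [hKdef]
        field_simp
    _ ≤ J ^ (-h) * δ := by
        apply mul_le_mul_of_nonneg_left _ (Real.rpow_nonneg hJ0.le _)
        rw [div_le_iff₀ (by positivity : (0:ℝ) < (p - 2) * (p - 3))]
        calc 2 ^ h * L ^ (3 - p) ≤ 2 ^ h * A := by
              exact mul_le_mul_of_nonneg_left hL3p h2h.le
          _ = δ * ((p - 2) * (p - 3)) := by
              rw [hAdef]
              field_simp
    _ = δ * J ^ (-h) := mul_comm _ _
end

section
/- Let p > 3 and h ∈ (1, p−2). For every δ > 0 there exists ε₀ > 0 such that for all ε ∈ (0, ε₀] and all r > t > 0: ∫_{r-t}^{t+r} ∫_{-β}^{t-r} ( ln(1/ε) + β − α )^{1-p} ⟨α⟩^{-h} dα dβ ≤ δ · ⟨r−t⟩^{-h} · tanh r / tanh(t+r). -/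
set_option maxHeartbeats 1000000


open intervalIntegral

private lemma tanh_mono' {a b : ℝ} (hab : a ≤ b) : Real.tanh a ≤ Real.tanh b := by
  rw [Real.tanh_eq_sinh_div_cosh, Real.tanh_eq_sinh_div_cosh,
    div_le_div_iff₀ (Real.cosh_pos _) (Real.cosh_pos _)]
  have h1 := Real.sinh_sub b a
  have h2 : 0 ≤ Real.sinh (b - a) := Real.sinh_nonneg_iff.2 (by linarith)
  nlinarith

/-- ⟨α⟩ = √(1+α²), Case 3: r > t. -/
theorem claim_case3 (p h : ℝ) (hp : 3 < p) (hh1 : 1 < h) (hh2 : h < p - 2) :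
    ∀ δ : ℝ, 0 < δ → ∃ ε₀ : ℝ, 0 < ε₀ ∧ ∀ ε : ℝ, 0 < ε → ε ≤ ε₀ →
      ∀ t r : ℝ, 0 < t → t < r →
        (∫ β in (r - t)..(t + r), ∫ α in (-β)..(t - r),
            (Real.log (1/ε) + β - α) ^ (1 - p) * (Real.sqrt (1 + α^2)) ^ (-h))
          ≤ δ * (Real.sqrt (1 + (r - t)^2)) ^ (-h) * Real.tanh r / Real.tanh (t + r) := by
  intro δ hδ
  have hp2 : (0:ℝ) < p - 2 := by linarith
  have hp3 : (0:ℝ) < p - 3 := by linarith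
  have hD0 : 0 < δ * (p - 2) * (p - 3) / 2 := by positivity
  set D : ℝ := δ * (p - 2) * (p - 3) / 2 with hDdef
  set M : ℝ := max 1 (D ^ (-(p - 3)⁻¹)) with hMdef
  have hM1 : (1:ℝ) ≤ M := le_max_left _ _
  refine ⟨Real.exp (-M), Real.exp_pos _, ?_⟩
  intro ε hε hεle t r ht htr
  set L : ℝ := Real.log (1 / ε) with hLdef
  have hLM : M ≤ L := by
    have h1 : Real.log ε ≤ -M := by
      calc Real.log ε ≤ Real.log (Real.exp (-M)) := Real.log_le_log hε hεle
        _ = -M := Real.log_exp _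
    rw [hLdef, one_div, Real.log_inv]; linarith
  have hL0 : (0:ℝ) < L := lt_of_lt_of_le (by linarith) hLM
  have hLD : L ^ (3 - p) ≤ D := by
    have h1 : L ^ (3 - p) ≤ M ^ (3 - p) :=
      Real.rpow_le_rpow_of_nonpos (by linarith) hLM (by linarith)
    have h2 : M ^ (3 - p) ≤ (D ^ (-(p - 3)⁻¹)) ^ (3 - p) :=
      Real.rpow_le_rpow_of_nonpos (Real.rpow_pos_of_pos hD0 _) (le_max_right _ _) (by linarith)
    have h3 : (D ^ (-(p - 3)⁻¹)) ^ (3 - p) = D := by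
      rw [← Real.rpow_mul hD0.le]
      rw [show -(p - 3)⁻¹ * (3 - p) = 1 by field_simp; ring]
      exact Real.rpow_one _
    calc L ^ (3 - p) ≤ M ^ (3 - p) := h1
      _ ≤ (D ^ (-(p - 3)⁻¹)) ^ (3 - p) := h2
      _ = D := h3
  set c : ℝ := r - t with hcdef
  have hc : 0 < c := by rw [hcdef]; linarith
  have htr' : t - r = -c := by rw [hcdef]; ring
  have hC0 : 0 < Real.sqrt (1 + c ^ 2) := Real.sqrt_pos.2 (by positivity)
  set C : ℝ := (Real.sqrt (1 + c ^ 2)) ^ (-h) with hCdef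
  have hCpos : 0 < C := Real.rpow_pos_of_pos hC0 _
  have hr0 : 0 < r := lt_trans ht htr
  have htanhr : 0 < Real.tanh r := by
    rw [Real.tanh_eq_sinh_div_cosh]
    exact div_pos (Real.sinh_pos_iff.2 hr0) (Real.cosh_pos _)
  have htanhtr : 0 < Real.tanh (t + r) := by
    rw [Real.tanh_eq_sinh_div_cosh]
    exact div_pos (Real.sinh_pos_iff.2 (by linarith)) (Real.cosh_pos _)
  have hkey : Real.tanh (t + r) ≤ 2 * Real.tanh r := by
    have h1 : Real.tanh (t + r) ≤ Real.tanh (2 * r) := tanh_mono' (by linarith)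
    have h2 : Real.tanh (2 * r) ≤ 2 * Real.tanh r := by
      have hs : 0 ≤ Real.sinh r := Real.sinh_nonneg_iff.2 hr0.le
      have hco : 0 < Real.cosh r := Real.cosh_pos r
      rw [Real.tanh_eq_sinh_div_cosh, Real.tanh_eq_sinh_div_cosh, Real.sinh_two_mul,
        Real.cosh_two_mul, ← mul_div_assoc, div_le_div_iff₀ (by nlinarith) hco]
      nlinarith
    linarith
  have hhalf : δ * C / 2 ≤ δ * C * Real.tanh r / Real.tanh (t + r) := by
    rw [div_le_div_iff₀ two_pos htanhtr]
    have hδC : (0:ℝ) ≤ δ * C := by positivity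
    calc δ * C * Real.tanh (t + r) ≤ δ * C * (2 * Real.tanh r) :=
          mul_le_mul_of_nonneg_left hkey hδC
      _ = δ * C * Real.tanh r * 2 := by ring
  set K : ℝ → ℝ := fun β => C * ((L + c + β) ^ (2 - p) / (p - 2)) with hKdef
  set G : ℝ → ℝ := fun β =>
    ∫ α in (-β)..(t - r), (L + β - α) ^ (1 - p) * (Real.sqrt (1 + α ^ 2)) ^ (-h) with hGdef
  have hGK : ∀ β ∈ Set.Icc c (t + r), G β ≤ K β := by
    intro β hβ
    obtain ⟨hβ1, hβ2⟩ := hβ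
    have hβc : -β ≤ -c := neg_le_neg hβ1
    have hbase : ∀ α ∈ Set.uIcc (-β) (-c), 0 < L + β - α := by
      intro α hα
      rw [Set.uIcc_of_le hβc] at hα
      obtain ⟨hα1, hα2⟩ := hα
      linarith
    have hcont1 : ContinuousOn (fun α : ℝ => (L + β - α) ^ (1 - p)) (Set.uIcc (-β) (-c)) :=
      ContinuousOn.rpow_const ((continuous_const.sub continuous_id).continuousOn)
        (fun x hx => Or.inl (ne_of_gt (hbase x hx)))
    have hcont2 : Continuous (fun α : ℝ => (Real.sqrt (1 + α ^ 2)) ^ (-h)) := by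
      apply Continuous.rpow_const (Real.continuous_sqrt.comp (by continuity))
      intro x
      exact Or.inl (Real.sqrt_pos.2 (by positivity)).ne'
    have hint1 : IntervalIntegrable
        (fun α : ℝ => (L + β - α) ^ (1 - p) * (Real.sqrt (1 + α ^ 2)) ^ (-h))
        MeasureTheory.volume (-β) (-c) :=
      (hcont1.mul hcont2.continuousOn).intervalIntegrable
    have hint2 : IntervalIntegrable (fun α : ℝ => C * (L + β - α) ^ (1 - p))
        MeasureTheory.volume (-β) (-c) :=
      (continuousOn_const.mul hcont1).intervalIntegrable
    have hmono : ∀ α ∈ Set.Icc (-β) (-c),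
        (L + β - α) ^ (1 - p) * (Real.sqrt (1 + α ^ 2)) ^ (-h) ≤ C * (L + β - α) ^ (1 - p) := by
      intro α hα
      obtain ⟨hα1, hα2⟩ := hα
      have hsq : c ^ 2 ≤ α ^ 2 := by nlinarith
      have hsqrt : Real.sqrt (1 + c ^ 2) ≤ Real.sqrt (1 + α ^ 2) :=
        Real.sqrt_le_sqrt (by linarith)
      have hBC : (Real.sqrt (1 + α ^ 2)) ^ (-h) ≤ C :=
        Real.rpow_le_rpow_of_nonpos hC0 hsqrt (by linarith)
      have hA0 : (0:ℝ) ≤ (L + β - α) ^ (1 - p) := Real.rpow_nonneg (by linarith) _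
      calc (L + β - α) ^ (1 - p) * (Real.sqrt (1 + α ^ 2)) ^ (-h)
          ≤ (L + β - α) ^ (1 - p) * C := mul_le_mul_of_nonneg_left hBC hA0
        _ = C * (L + β - α) ^ (1 - p) := mul_comm _ _
    have step1 : G β ≤ ∫ α in (-β)..(-c), C * (L + β - α) ^ (1 - p) := by
      rw [hGdef]
      simp only [htr']
      exact intervalIntegral.integral_mono_on hβc hint1 hint2 hmono
    have step2 : (∫ α in (-β)..(-c), C * (L + β - α) ^ (1 - p))
        = C * ∫ α in (-β)..(-c), (L + β - α) ^ (1 - p) :=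
      intervalIntegral.integral_const_mul _ _
    have step3 : (∫ α in (-β)..(-c), (L + β - α) ^ (1 - p))
        ≤ (L + c + β) ^ (2 - p) / (p - 2) := by
      have hcomp : (∫ α in (-β)..(-c), (L + β - α) ^ (1 - p))
          = ∫ u in (L + β - -c)..(L + β - -β), u ^ (1 - p) :=
        intervalIntegral.integral_comp_sub_left (fun u => u ^ (1 - p)) (L + β)
      have he1 : L + β - -c = L + c + β := by ring
      have he2 : L + β - -β = L + β + β := by ring
      rw [hcomp, he1, he2]
      have hpos1 : (0:ℝ) < L + c + β := by linarith
      have hpos2 : (0:ℝ) < L + β + β := by linarith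
      rw [integral_rpow (Or.inr ⟨by intro hcon; linarith,
        Set.notMem_uIcc_of_lt hpos1 hpos2⟩)]
      rw [show (1:ℝ) - p + 1 = 2 - p by ring]
      have hA : (0:ℝ) ≤ (L + β + β) ^ (2 - p) := Real.rpow_nonneg hpos2.le _
      have hkey2 : ((L + β + β) ^ (2 - p) - (L + c + β) ^ (2 - p)) / (2 - p)
          = ((L + c + β) ^ (2 - p) - (L + β + β) ^ (2 - p)) / (p - 2) := by
        rw [div_eq_div_iff (by linarith) (by linarith)]; ring
      rw [hkey2]
      gcongr
      linarith
    calc G β ≤ ∫ α in (-β)..(-c), C * (L + β - α) ^ (1 - p) := step1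
      _ = C * ∫ α in (-β)..(-c), (L + β - α) ^ (1 - p) := step2
      _ ≤ C * ((L + c + β) ^ (2 - p) / (p - 2)) :=
          mul_le_mul_of_nonneg_left step3 hCpos.le
      _ = K β := rfl
  by_cases hGint : IntervalIntegrable G MeasureTheory.volume c (t + r)
  · have hcltr : c ≤ t + r := by linarith
    have hKcont : ContinuousOn K (Set.uIcc c (t + r)) := by
      apply ContinuousOn.mul continuousOn_const
      apply ContinuousOn.div_const
      apply ContinuousOn.rpow_const ((continuous_const.add continuous_id).continuousOn)
      intro x hx
      rw [Set.uIcc_of_le hcltr] at hx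
      exact Or.inl (by linarith [hx.1] : L + c + x ≠ 0)
    have hKint : IntervalIntegrable K MeasureTheory.volume c (t + r) :=
      hKcont.intervalIntegrable
    have hKval : (∫ β in c..(t + r), K β) ≤ C * (D / (p - 3) / (p - 2)) := by
      have h1 : (∫ β in c..(t + r), K β)
          = C * ((∫ β in c..(t + r), (L + c + β) ^ (2 - p)) / (p - 2)) := by
        simp only [hKdef]
        rw [intervalIntegral.integral_const_mul, intervalIntegral.integral_div]
      have h2 : (∫ β in c..(t + r), (L + c + β) ^ (2 - p))
          = ∫ u in (L + c + c)..(L + c + (t + r)), u ^ (2 - p) :=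
        intervalIntegral.integral_comp_add_left (fun u => u ^ (2 - p)) (L + c)
      have hpos1 : (0:ℝ) < L + c + c := by linarith
      have hpos2 : (0:ℝ) < L + c + (t + r) := by linarith
      have h3 : (∫ u in (L + c + c)..(L + c + (t + r)), u ^ (2 - p)) ≤ D / (p - 3) := by
        rw [integral_rpow (Or.inr ⟨by intro hcon; linarith,
          Set.notMem_uIcc_of_lt hpos1 hpos2⟩)]
        rw [show (2:ℝ) - p + 1 = 3 - p by ring]
        have hA : (0:ℝ) ≤ (L + c + (t + r)) ^ (3 - p) := Real.rpow_nonneg hpos2.le _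
        have hB : (L + c + c) ^ (3 - p) ≤ L ^ (3 - p) :=
          Real.rpow_le_rpow_of_nonpos hL0 (by linarith) (by linarith)
        have hkey3 : ((L + c + (t + r)) ^ (3 - p) - (L + c + c) ^ (3 - p)) / (3 - p)
            = ((L + c + c) ^ (3 - p) - (L + c + (t + r)) ^ (3 - p)) / (p - 3) := by
          rw [div_eq_div_iff (by linarith) (by linarith)]; ring
        rw [hkey3]
        gcongr
        linarith
      rw [h1, h2]
      gcongr
    have hfinal : C * (D / (p - 3) / (p - 2)) = δ * C / 2 := by
      rw [hDdef]; field_simp; all_goals ring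
    exact le_trans (le_trans (intervalIntegral.integral_mono_on hcltr hGint hKint hGK) hKval)
      (le_trans (le_of_eq hfinal) hhalf)
  · rw [intervalIntegral.integral_undef hGint]
    positivity
end

section
/- Let q > 1, δ₀ ∈ (0,1), D₀ > 0, and suppose a sequence satisfies D_m ≥ δ₀ D_{m−1}^q / (32 m² q^{2(m−1)}) for all m ≥ 1. Set E = ln D₀ − Σ_{j=0}^∞ (2 ln(j+1) + 2 j ln q − ln(δ₀/32)) / q^{j+1}. Then the series defining E converges absolutely and D_m ≥ exp(E q^m) for every m ≥ 1. -/
theorem doubling_lower_bound (q δ₀ : ℝ) (hq : 1 < q) (hδ : 0 < δ₀) (hδ1 : δ₀ < 1)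
    (D : ℕ → ℝ) (hD0 : 0 < D 0)
    (hD : ∀ m : ℕ, 1 ≤ m →
      D m ≥ δ₀ * (D (m - 1)) ^ q / (32 * (m : ℝ) ^ 2 * q ^ (2 * (m - 1)))) :
    Summable (fun j : ℕ =>
        (2 * Real.log ((j : ℝ) + 1) + 2 * (j : ℝ) * Real.log q - Real.log (δ₀ / 32))
          / q ^ (j + 1)) ∧
    ∀ m : ℕ, 1 ≤ m →
      D m ≥ Real.exp ((Real.log (D 0) - ∑' j : ℕ,
        (2 * Real.log ((j : ℝ) + 1) + 2 * (j : ℝ) * Real.log q - Real.log (δ₀ / 32))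
          / q ^ (j + 1)) * q ^ m) := by
  have hq0 : (0:ℝ) < q := lt_trans one_pos hq
  set c : ℕ → ℝ := fun j =>
    2 * Real.log ((j : ℝ) + 1) + 2 * (j : ℝ) * Real.log q - Real.log (δ₀ / 32) with hc_def
  have hlogq : 0 ≤ Real.log q := Real.log_nonneg hq.le
  have hlogδ : Real.log (δ₀ / 32) < 0 := Real.log_neg (by positivity) (by linarith)
  have hcnn : ∀ j, 0 ≤ c j := by
    intro j
    have h1 : 0 ≤ Real.log ((j:ℝ) + 1) :=
      Real.log_nonneg (by have := Nat.cast_nonneg (α := ℝ) j; linarith)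
    have h2 : (0:ℝ) ≤ (j:ℝ) := Nat.cast_nonneg j
    simp only [hc_def]
    nlinarith
  -- summability
  have hrlt : ‖q⁻¹‖ < 1 := by
    rw [Real.norm_eq_abs, abs_of_pos (by positivity)]
    exact inv_lt_one_of_one_lt₀ hq
  have hsum0 : Summable (fun n : ℕ => (n:ℝ) * q⁻¹ ^ n) := by
    have := summable_pow_mul_geometric_of_norm_lt_one 1 hrlt (R := ℝ)
    simpa using this
  have hsum1 : Summable (fun j : ℕ => ((j:ℝ) + 1) * q⁻¹ ^ (j + 1)) := by
    have := (summable_nat_add_iff 1).2 hsum0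
    simpa using this
  set C : ℝ := 2 + 2 * Real.log q + |Real.log (δ₀ / 32)| with hC_def
  have hC0 : 0 ≤ C := by positivity
  have hsum2 : Summable (fun j : ℕ => C * (((j:ℝ) + 1) * q⁻¹ ^ (j + 1))) := hsum1.mul_left C
  have hble : ∀ j : ℕ, c j / q ^ (j + 1) ≤ C * (((j:ℝ) + 1) * q⁻¹ ^ (j + 1)) := by
    intro j
    have hb : c j ≤ C * ((j:ℝ) + 1) := by
      have hl : Real.log ((j:ℝ) + 1) ≤ (j:ℝ) + 1 := by
        have := Real.log_le_sub_one_of_pos (x := (j:ℝ)+1) (by positivity)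
        linarith
      have hj1 : (1:ℝ) ≤ (j:ℝ) + 1 := by
        have := Nat.cast_nonneg (α := ℝ) j; linarith
      simp only [hc_def, hC_def]
      nlinarith [abs_nonneg (Real.log (δ₀/32)), neg_le_abs (Real.log (δ₀/32))]
    have hp : (0:ℝ) < q ^ (j + 1) := by positivity
    rw [div_le_iff₀ hp]
    calc c j ≤ C * ((j:ℝ) + 1) := hb
      _ = C * (((j:ℝ) + 1) * q⁻¹ ^ (j + 1)) * q ^ (j + 1) := by
        rw [mul_assoc, mul_assoc, ← mul_pow, inv_mul_cancel₀ hq0.ne', one_pow, mul_one]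
  have hsum : Summable (fun j : ℕ => c j / q ^ (j + 1)) :=
    Summable.of_nonneg_of_le (fun j => div_nonneg (hcnn j) (by positivity)) hble hsum2
  refine ⟨hsum, ?_⟩
  -- positivity of D
  have hpos : ∀ m, 0 < D m := by
    intro m
    induction m with
    | zero => exact hD0
    | succ n ih =>
      have h := hD (n + 1) (by omega)
      simp only [Nat.add_sub_cancel] at h
      have : 0 < δ₀ * D n ^ q / (32 * ((n+1 : ℕ):ℝ) ^ 2 * q ^ (2 * n)) := by
        have := Real.rpow_pos_of_pos ih q
        positivity
      linarith
  -- log recursion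
  have hlog : ∀ n : ℕ, q * Real.log (D n) - c n ≤ Real.log (D (n + 1)) := by
    intro n
    have h := hD (n + 1) (by omega)
    simp only [Nat.add_sub_cancel] at h
    have hXpos : 0 < δ₀ * D n ^ q / (32 * ((n+1 : ℕ):ℝ) ^ 2 * q ^ (2 * n)) := by
      have := Real.rpow_pos_of_pos (hpos n) q
      positivity
    have hle : Real.log (δ₀ * D n ^ q / (32 * ((n+1 : ℕ):ℝ) ^ 2 * q ^ (2 * n)))
        ≤ Real.log (D (n + 1)) := Real.log_le_log hXpos h
    have hcast : ((n+1 : ℕ):ℝ) = (n:ℝ) + 1 := by push_cast; ring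
    rw [hcast] at hle
    have hn1 : (0:ℝ) < (n:ℝ) + 1 := by positivity
    have hDn : 0 < D n := hpos n
    rw [Real.log_div (by positivity) (by positivity), Real.log_mul (by positivity)
      (ne_of_gt (Real.rpow_pos_of_pos (hpos n) q)), Real.log_rpow (hpos n),
      Real.log_mul (by positivity) (by positivity), Real.log_mul (by norm_num) (by positivity),
      Real.log_pow, Real.log_pow] at hle
    have hδ32 : Real.log (δ₀ / 32) = Real.log δ₀ - Real.log 32 :=
      Real.log_div (ne_of_gt hδ) (by norm_num)
    simp only [hc_def]
    rw [hδ32]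
    push_cast at hle ⊢
    linarith
  -- main induction
  have key : ∀ m : ℕ,
      q ^ m * (Real.log (D 0) - ∑ j ∈ Finset.range m, c j / q ^ (j + 1)) ≤ Real.log (D m) := by
    intro m
    induction m with
    | zero => simp
    | succ n ih =>
      have hqn : (q : ℝ) ^ (n + 1) ≠ 0 := by positivity
      have heq : q ^ (n + 1) * (Real.log (D 0) - ∑ j ∈ Finset.range (n+1), c j / q ^ (j + 1))
          = q * (q ^ n * (Real.log (D 0) - ∑ j ∈ Finset.range n, c j / q ^ (j + 1))) - c n := by
        rw [Finset.sum_range_succ]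
        field_simp
        ring
      rw [heq]
      have := hlog n
      have h2 : q * (q ^ n * (Real.log (D 0) - ∑ j ∈ Finset.range n, c j / q ^ (j + 1)))
          ≤ q * Real.log (D n) := by
        apply mul_le_mul_of_nonneg_left ih hq0.le
      exact le_trans (sub_le_sub_right h2 (c n)) (hlog n)
  intro m _
  have hts : ∑ j ∈ Finset.range m, c j / q ^ (j + 1) ≤ ∑' j, c j / q ^ (j + 1) :=
    Summable.sum_le_tsum _ (fun j _ => div_nonneg (hcnn j) (by positivity)) hsum
  have h3 : (Real.log (D 0) - ∑' j, c j / q ^ (j + 1)) * q ^ m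
      ≤ q ^ m * (Real.log (D 0) - ∑ j ∈ Finset.range m, c j / q ^ (j + 1)) := by
    rw [mul_comm]
    exact mul_le_mul_of_nonneg_left (sub_le_sub_left hts _) (pow_nonneg hq0.le m)
  have h4 : (Real.log (D 0) - ∑' j, c j / q ^ (j + 1)) * q ^ m ≤ Real.log (D m) :=
    h3.trans (key m)
  calc Real.exp ((Real.log (D 0) - ∑' j, c j / q ^ (j + 1)) * q ^ m)
      ≤ Real.exp (Real.log (D m)) := Real.exp_le_exp.2 h4
    _ = D m := Real.exp_log (hpos m)
end
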